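/- If k and N satisfy 3R²kN|b| < 1 with R = ‖U‖_{L²}, then the implicit midpoint system Y = U + k b F((Y+U)/2) on S_N has at most one solution Y with ‖Y‖ = ‖U‖, where F(u) = −i(−∂ₓₓ)^s u + i P_N(|u|²u). -/

import Mathlib

open Real

/-- The trigonometric polynomial of degree ≤ N with coefficients `c`. -/
noncomputable def trig (N : ℕ) (c : ℤ → ℂ) : ℝ → ℂ :=
  fun x => ∑ j ∈ Finset.Icc (-(N:ℤ)) (N:ℤ),
    c j * Complex.exp (Complex.I * (j:ℂ) * (x:ℂ))

/-- The Fourier–Galerkin vector field `F(u) = −i(−∂ₓₓ)ˢu + i P_N(|u|²u)`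
on `S_N`, applied to the trigonometric polynomial with coefficients `c`. -/
noncomputable def Fmap (s : ℝ) (N : ℕ) (c : ℤ → ℂ) : ℝ → ℂ :=
  fun x =>
    -Complex.I * (∑ j ∈ Finset.Icc (-(N:ℤ)) (N:ℤ),
        ((|(j:ℝ)| ^ (2*s) : ℝ) : ℂ) * c j * Complex.exp (Complex.I * (j:ℂ) * (x:ℂ)))
    + Complex.I * (∑ j ∈ Finset.Icc (-(N:ℤ)) (N:ℤ),
        (((1/(2*π) : ℝ) : ℂ) *
          ∫ y in (-π)..π, (‖trig N c y‖ : ℂ)^2 * trig N c y *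
            Complex.exp (-Complex.I * (j:ℂ) * (y:ℂ)))
        * Complex.exp (Complex.I * (j:ℂ) * (x:ℂ)))


noncomputable def esum (S : Finset ℤ) (c : ℤ → ℂ) : ℝ → ℂ :=
  fun x => ∑ j ∈ S, c j * Complex.exp (Complex.I * (j:ℂ) * (x:ℂ))

lemma esum_cont (S : Finset ℤ) (c : ℤ → ℂ) : Continuous (esum S c) := by
  unfold esum
  exact continuous_finset_sum _ fun j _ => by fun_prop

lemma integral_exp_int (n : ℤ) :
    ∫ x in (-π)..π, Complex.exp (Complex.I * (n:ℂ) * (x:ℂ)) =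
      if n = 0 then (2*π:ℝ) else 0 := by
  rcases eq_or_ne n 0 with h | h
  · simp [h]
    ring
  · rw [if_neg h]
    have hc : (Complex.I * (n:ℂ)) ≠ 0 := by
      simp [Complex.I_ne_zero, h]
    have := integral_exp_mul_complex (a := -π) (b := π) hc
    rw [show (fun x : ℝ => Complex.exp (Complex.I * (n:ℂ) * (x:ℂ)))
        = fun x : ℝ => Complex.exp ((Complex.I * (n:ℂ)) * (x:ℂ)) from rfl] at *
    rw [this]
    have : Complex.exp (Complex.I * (n:ℂ) * (π:ℂ)) =
        Complex.exp (Complex.I * (n:ℂ) * ((-π:ℝ):ℂ)) := by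
      rw [Complex.exp_eq_exp_iff_exists_int]
      refine ⟨n, ?_⟩
      push_cast
      ring
    rw [this]
    simp

lemma coef (S : Finset ℤ) (c : ℤ → ℂ) (l : ℤ) :
    ∫ x in (-π)..π, esum S c x * Complex.exp (-Complex.I * (l:ℂ) * (x:ℂ))
      = if l ∈ S then (2*π:ℝ) * c l else 0 := by
  have hpt : ∀ x : ℝ, esum S c x * Complex.exp (-Complex.I * (l:ℂ) * (x:ℂ))
      = ∑ j ∈ S, c j * Complex.exp (Complex.I * ((j - l : ℤ):ℂ) * (x:ℂ)) := by
    intro x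
    rw [esum, Finset.sum_mul]
    refine Finset.sum_congr rfl fun j _ => ?_
    rw [mul_assoc, ← Complex.exp_add]
    congr 1
    push_cast
    ring
  rw [intervalIntegral.integral_congr (g := fun x => ∑ j ∈ S,
      c j * Complex.exp (Complex.I * ((j - l : ℤ):ℂ) * (x:ℂ))) (fun x _ => hpt x)]
  rw [intervalIntegral.integral_finset_sum]
  · have : ∀ j ∈ S, (∫ x in (-π)..π, c j * Complex.exp (Complex.I * ((j - l : ℤ):ℂ) * (x:ℂ)))
        = if j = l then (2*π:ℝ) * c l else 0 := by
      intro j _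
      rw [intervalIntegral.integral_const_mul, integral_exp_int]
      rcases eq_or_ne j l with rfl | h
      · simp [mul_comm]
      · simp [sub_eq_zero, h]
    rw [Finset.sum_congr rfl this, Finset.sum_ite_eq' S l (fun _ => (2*π:ℝ) * c l)]
  · intro j _
    exact (by fun_prop : Continuous fun x : ℝ =>
      c j * Complex.exp (Complex.I * ((j - l : ℤ):ℂ) * (x:ℂ))).intervalIntegrable _ _

lemma conj_esum (S : Finset ℤ) (c : ℤ → ℂ) (x : ℝ) :
    (starRingEnd ℂ) (esum S c x) =
      ∑ j ∈ S, (starRingEnd ℂ) (c j) * Complex.exp (-Complex.I * (j:ℂ) * (x:ℂ)) := by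
  rw [esum, map_sum]
  refine Finset.sum_congr rfl fun j _ => ?_
  rw [map_mul, ← Complex.exp_conj]
  congr 1
  simp [map_mul, Complex.conj_I, Complex.conj_ofReal]

lemma mul_conj_integral (S : Finset ℤ) (c : ℤ → ℂ) (H : ℝ → ℂ) (hH : Continuous H) :
    ∫ x in (-π)..π, H x * (starRingEnd ℂ) (esum S c x)
      = ∑ j ∈ S, (starRingEnd ℂ) (c j) *
          ∫ x in (-π)..π, H x * Complex.exp (-Complex.I * (j:ℂ) * (x:ℂ)) := by
  have hpt : ∀ x : ℝ, H x * (starRingEnd ℂ) (esum S c x)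
      = ∑ j ∈ S, (starRingEnd ℂ) (c j) * (H x * Complex.exp (-Complex.I * (j:ℂ) * (x:ℂ))) := by
    intro x
    rw [conj_esum, Finset.mul_sum]
    exact Finset.sum_congr rfl fun j _ => by ring
  rw [intervalIntegral.integral_congr (fun x _ => hpt x), intervalIntegral.integral_finset_sum]
  · exact Finset.sum_congr rfl fun j _ => intervalIntegral.integral_const_mul _ _
  · intro j _
    exact ((by fun_prop : Continuous fun x : ℝ => (starRingEnd ℂ) (c j) *
      (H x * Complex.exp (-Complex.I * (j:ℂ) * (x:ℂ))))).intervalIntegrable _ _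

lemma parseval (S : Finset ℤ) (c : ℤ → ℂ) :
    ∫ x in (-π)..π, ‖esum S c x‖^2 = (2*π) * ∑ j ∈ S, ‖c j‖^2 := by
  have key : ((∫ x in (-π)..π, ‖esum S c x‖^2 : ℝ) : ℂ)
      = ((2*π) * ∑ j ∈ S, ‖c j‖^2 : ℝ) := by
    rw [← intervalIntegral.integral_ofReal]
    have hpt : ∀ x : ℝ, ((‖esum S c x‖^2 : ℝ) : ℂ)
        = esum S c x * (starRingEnd ℂ) (esum S c x) := by
      intro x
      rw [Complex.mul_conj]
      norm_cast
      simp [Complex.normSq_eq_norm_sq]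
    rw [intervalIntegral.integral_congr (fun x _ => hpt x),
      mul_conj_integral S c _ (esum_cont S c)]
    push_cast
    rw [Finset.mul_sum]
    refine Finset.sum_congr rfl fun j hj => ?_
    rw [coef, if_pos hj]
    rw [show (starRingEnd ℂ) (c j) * ((2*π:ℝ) * c j) = ((2*π:ℝ):ℂ) * (c j * (starRingEnd ℂ) (c j))
      from by ring, Complex.mul_conj]
    norm_cast
    simp [Complex.normSq_eq_norm_sq]
  exact_mod_cast key

lemma bessel (S : Finset ℤ) (H : ℝ → ℂ) (hH : Continuous H) (h : ℤ → ℂ)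
    (hh : ∀ l, ((2*π:ℝ):ℂ) * h l
      = ∫ y in (-π)..π, H y * Complex.exp (-Complex.I * (l:ℂ) * (y:ℂ))) :
    (2*π) * ∑ l ∈ S, ‖h l‖^2 ≤ ∫ y in (-π)..π, ‖H y‖^2 := by
  set P := esum S h with hP
  have hPc : Continuous P := esum_cont S h
  have hC : ∫ x in (-π)..π, H x * (starRingEnd ℂ) (P x)
      = (((2*π) * ∑ l ∈ S, ‖h l‖^2 : ℝ) : ℂ) := by
    rw [hP, mul_conj_integral S h H hH]
    push_cast
    rw [Finset.mul_sum]
    refine Finset.sum_congr rfl fun l _ => ?_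
    rw [← hh l]
    rw [show (starRingEnd ℂ) (h l) * (((2*π:ℝ):ℂ) * h l)
      = ((2*π:ℝ):ℂ) * (h l * (starRingEnd ℂ) (h l)) from by ring, Complex.mul_conj]
    norm_cast
    simp [Complex.normSq_eq_norm_sq]
  have hre : ∫ x in (-π)..π, (H x * (starRingEnd ℂ) (P x)).re
      = (2*π) * ∑ l ∈ S, ‖h l‖^2 := by
    have hint : IntervalIntegrable (fun x => H x * (starRingEnd ℂ) (P x))
        MeasureTheory.volume (-π) π :=
      ((hH.mul (Complex.continuous_conj.comp hPc))).intervalIntegrable _ _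
    have := Complex.reCLM.intervalIntegral_comp_comm hint
    simp only [Complex.reCLM_apply] at this
    rw [this, hC, Complex.ofReal_re]
  have hnonneg : 0 ≤ ∫ x in (-π)..π, ‖H x - P x‖^2 :=
    intervalIntegral.integral_nonneg (by linarith [pi_pos]) (fun x _ => by positivity)
  have hexp : ∫ x in (-π)..π, ‖H x - P x‖^2
      = (∫ x in (-π)..π, ‖H x‖^2) - 2 * ((2*π) * ∑ l ∈ S, ‖h l‖^2)
        + (2*π) * ∑ l ∈ S, ‖h l‖^2 := by
    have hpt : ∀ x : ℝ, ‖H x - P x‖^2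
        = ‖H x‖^2 - 2 * (H x * (starRingEnd ℂ) (P x)).re + ‖P x‖^2 := by
      intro x
      simp only [Complex.sq_norm]
      rw [Complex.normSq_sub]
      ring
    rw [intervalIntegral.integral_congr (fun x _ => hpt x)]
    have i1 : IntervalIntegrable (fun x => ‖H x‖^2) MeasureTheory.volume (-π) π :=
      (by fun_prop : Continuous fun x => ‖H x‖^2).intervalIntegrable _ _
    have i2 : IntervalIntegrable (fun x => 2 * (H x * (starRingEnd ℂ) (P x)).re)
        MeasureTheory.volume (-π) π :=
      (by fun_prop : Continuous fun x =>
        2 * (H x * (starRingEnd ℂ) (P x)).re).intervalIntegrable _ _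
    have i3 : IntervalIntegrable (fun x => ‖P x‖^2) MeasureTheory.volume (-π) π :=
      (by fun_prop : Continuous fun x => ‖P x‖^2).intervalIntegrable _ _
    rw [intervalIntegral.integral_add (i1.sub i2) i3, intervalIntegral.integral_sub i1 i2,
      intervalIntegral.integral_const_mul, hre, hP, parseval]
  linarith [hnonneg, hexp]

lemma norm_sq_c (z : ℂ) : ((‖z‖:ℂ))^2 = z * (starRingEnd ℂ) z := by
  rw [Complex.mul_conj]
  norm_cast
  simp [Complex.normSq_eq_norm_sq]

lemma cubic_lip (z w : ℂ) (M : ℝ) (hz : ‖z‖ ≤ M) (hw : ‖w‖ ≤ M) :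
    ‖(‖z‖:ℂ)^2 * z - (‖w‖:ℂ)^2 * w‖ ≤ 3*M^2*‖z-w‖ := by
  have hM : 0 ≤ M := le_trans (norm_nonneg z) hz
  have hid : (‖z‖:ℂ)^2*z - (‖w‖:ℂ)^2*w
      = z^2 * ((starRingEnd ℂ) z - (starRingEnd ℂ) w)
        + (z+w) * (starRingEnd ℂ) w * (z-w) := by
    rw [norm_sq_c, norm_sq_c]; ring
  rw [hid]
  have h1 : ‖z^2 * ((starRingEnd ℂ) z - (starRingEnd ℂ) w)‖ ≤ M^2 * ‖z - w‖ := by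
    rw [norm_mul, ← map_sub, RCLike.norm_conj, norm_pow]
    nlinarith [norm_nonneg (z-w), pow_le_pow_left₀ (norm_nonneg z) hz 2]
  have h2 : ‖(z+w) * (starRingEnd ℂ) w * (z-w)‖ ≤ 2*M^2 * ‖z - w‖ := by
    rw [norm_mul, norm_mul, RCLike.norm_conj]
    have hzw : ‖z + w‖ ≤ 2*M := le_trans (norm_add_le z w) (by linarith)
    nlinarith [norm_nonneg (z-w), norm_nonneg w, norm_nonneg (z+w),
      mul_le_mul hzw hw (norm_nonneg w) (by linarith : (0:ℝ) ≤ 2*M)]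
  exact le_trans (norm_add_le _ _) (by linarith)

lemma esum_sup (S : Finset ℤ) (c : ℤ → ℂ) (x : ℝ) :
    ‖esum S c x‖ ≤ Real.sqrt ((S.card : ℝ) * ∑ j ∈ S, ‖c j‖^2) := by
  have h1 : ‖esum S c x‖ ≤ ∑ j ∈ S, ‖c j‖ := by
    refine le_trans (norm_sum_le _ _) (le_of_eq (Finset.sum_congr rfl fun j _ => ?_))
    rw [norm_mul]
    have : ‖Complex.exp (Complex.I * (j:ℂ) * (x:ℂ))‖ = 1 := by
      rw [Complex.norm_exp]
      simp [Complex.mul_re, Complex.mul_im]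
    rw [this, mul_one]
  have h2 : ∑ j ∈ S, ‖c j‖ ≤ Real.sqrt (S.card : ℝ) * Real.sqrt (∑ j ∈ S, ‖c j‖^2) := by
    have := Real.sum_mul_le_sqrt_mul_sqrt S (fun _ => (1:ℝ)) (fun j => ‖c j‖)
    simpa using this
  refine le_trans h1 (le_trans h2 ?_)
  rw [← Real.sqrt_mul (by positivity)]

lemma esum_inj (S : Finset ℤ) (c d : ℤ → ℂ) (h : ∀ x : ℝ, esum S c x = esum S d x) :
    ∀ l ∈ S, c l = d l := by
  intro l hl
  have h1 := coef S c l
  have h2 := coef S d l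
  rw [if_pos hl] at h1 h2
  rw [intervalIntegral.integral_congr
    (g := fun x => esum S d x * Complex.exp (-Complex.I * (l:ℂ) * (x:ℂ)))
    (fun x _ => by rw [h x]), h2] at h1
  have h2pi : ((2*π:ℝ):ℂ) ≠ 0 := by
    simp [Real.pi_ne_zero]
  exact (mul_left_cancel₀ h2pi h1).symm

noncomputable def ghat (N : ℕ) (c : ℤ → ℂ) (j : ℤ) : ℂ :=
  (((1/(2*π) : ℝ)) : ℂ) *
    ∫ y in (-π)..π, (‖trig N c y‖ : ℂ)^2 * trig N c y *
      Complex.exp (-Complex.I * (j:ℂ) * (y:ℂ))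

lemma trig_esum (N : ℕ) (c : ℤ → ℂ) : trig N c = esum (Finset.Icc (-(N:ℤ)) (N:ℤ)) c := rfl

lemma trig_cont (N : ℕ) (c : ℤ → ℂ) : Continuous (trig N c) := by
  rw [trig_esum]; exact esum_cont _ _

lemma coef_eqn (s k b : ℝ) (N : ℕ) (uc y m : ℤ → ℂ)
    (h : ∀ x : ℝ, trig N y x = trig N uc x + ((k*b:ℝ):ℂ) * Fmap s N m x) :
    ∀ l ∈ Finset.Icc (-(N:ℤ)) (N:ℤ), y l = uc l + ((k*b:ℝ):ℂ) *
      (-Complex.I * ((|(l:ℝ)| ^ (2*s) : ℝ):ℂ) * m l + Complex.I * ghat N m l) := by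
  have hw : ∀ x : ℝ, esum (Finset.Icc (-(N:ℤ)) (N:ℤ)) y x
      = esum (Finset.Icc (-(N:ℤ)) (N:ℤ)) (fun j => uc j + ((k*b:ℝ):ℂ) *
        (-Complex.I * ((|(j:ℝ)| ^ (2*s) : ℝ):ℂ) * m j + Complex.I * ghat N m j)) x := by
    intro x
    rw [← trig_esum, h x]
    show trig N uc x + _ * Fmap s N m x = _
    simp only [trig, Fmap, esum, ghat, mul_add, Finset.mul_sum, ← Finset.sum_add_distrib]
    exact Finset.sum_congr rfl fun j _ => by ring
  exact esum_inj _ _ _ hw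

set_option maxHeartbeats 1000000 in
/-- Uniqueness for the implicit midpoint system on `S_N` under the step-size
restriction `3R²kN|b| < 1`, among solutions with `‖Y‖ = ‖U‖`. -/
theorem imr_step_unique (s k b : ℝ) (hs1 : 0 < s) (hs2 : s ≤ 1)
    (hk : 0 < k) (hb : b ≠ 0) (N : ℕ) (uc y₁ y₂ : ℤ → ℂ) (R : ℝ)
    (hR : R = Real.sqrt (∫ x in (-π)..π, ‖trig N uc x‖^2))
    (hsmall : 3 * R^2 * k * (N:ℝ) * |b| < 1)
    (h1 : ∀ x : ℝ, trig N y₁ x = trig N uc x +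
      ((k*b : ℝ) : ℂ) * Fmap s N (fun j => (y₁ j + uc j)/2) x)
    (h2 : ∀ x : ℝ, trig N y₂ x = trig N uc x +
      ((k*b : ℝ) : ℂ) * Fmap s N (fun j => (y₂ j + uc j)/2) x)
    (hn1 : Real.sqrt (∫ x in (-π)..π, ‖trig N y₁ x‖^2) = R)
    (hn2 : Real.sqrt (∫ x in (-π)..π, ‖trig N y₂ x‖^2) = R) :
    ∀ x : ℝ, trig N y₁ x = trig N y₂ x := by
  have hπ := Real.pi_pos
  set T := Finset.Icc (-(N:ℤ)) (N:ℤ) with hTdef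
  -- coefficient equations
  have hc1 := coef_eqn s k b N uc y₁ (fun j => (y₁ j + uc j)/2) h1
  have hc2 := coef_eqn s k b N uc y₂ (fun j => (y₂ j + uc j)/2) h2
  -- it suffices to show the coefficients agree
  suffices hcc : ∀ l ∈ T, y₁ l = y₂ l by
    intro x
    exact Finset.sum_congr rfl fun j hj => by rw [hcc j hj]
  -- norms
  set Q : ℝ := R^2 / (2*π) with hQdef
  have hQ0 : 0 ≤ Q := by positivity
  have hsum : ∀ (yv : ℤ → ℂ),
      Real.sqrt (∫ x in (-π)..π, ‖trig N yv x‖^2) = R → ∑ j ∈ T, ‖yv j‖^2 = Q := by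
    intro yv hyv
    have hnn : 0 ≤ ∫ x in (-π)..π, ‖trig N yv x‖^2 :=
      intervalIntegral.integral_nonneg (by linarith) (fun x _ => by positivity)
    have hint : ∫ x in (-π)..π, ‖trig N yv x‖^2 = R^2 := by
      rw [← hyv]; exact (Real.sq_sqrt hnn).symm
    rw [trig_esum, parseval] at hint
    rw [hQdef, ← hint]
    field_simp
    rfl
  have hu : ∑ j ∈ T, ‖uc j‖^2 = Q := hsum uc hR.symm
  have hy1 : ∑ j ∈ T, ‖y₁ j‖^2 = Q := hsum y₁ hn1
  have hy2 : ∑ j ∈ T, ‖y₂ j‖^2 = Q := hsum y₂ hn2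
  -- midpoint coefficient bounds
  have hmid : ∀ (yv : ℤ → ℂ), (∑ j ∈ T, ‖yv j‖^2 = Q) →
      ∑ j ∈ T, ‖(yv j + uc j)/2‖^2 ≤ Q := by
    intro yv hyQ
    have hcs := Real.sum_mul_le_sqrt_mul_sqrt T (fun j => ‖yv j‖) (fun j => ‖uc j‖)
    rw [hyQ, hu, Real.mul_self_sqrt hQ0] at hcs
    have hp : ∀ j ∈ T, ‖(yv j + uc j)/2‖^2
        ≤ ‖yv j‖^2/4 + (‖yv j‖ * ‖uc j‖)/2 + ‖uc j‖^2/4 := by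
      intro j _
      have h1 : ‖(yv j + uc j)/2‖ = ‖yv j + uc j‖/2 := by
        rw [norm_div]
        norm_num
      have h2 : ‖yv j + uc j‖ ≤ ‖yv j‖ + ‖uc j‖ := norm_add_le _ _
      rw [h1]
      nlinarith [norm_nonneg (yv j + uc j), norm_nonneg (yv j), norm_nonneg (uc j)]
    have := Finset.sum_le_sum hp
    rw [Finset.sum_add_distrib, Finset.sum_add_distrib] at this
    rw [← Finset.sum_div, ← Finset.sum_div, ← Finset.sum_div] at this
    rw [hyQ, hu] at this
    linarith
  have hm1Q : ∑ j ∈ T, ‖(y₁ j + uc j)/2‖^2 ≤ Q := hmid y₁ hy1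
  have hm2Q : ∑ j ∈ T, ‖(y₂ j + uc j)/2‖^2 ≤ Q := hmid y₂ hy2
  rcases Nat.eq_zero_or_pos N with hN0 | hNpos
  · -- degenerate case N = 0
    subst hN0
    have h0Icc : (0:ℤ) ∈ Finset.Icc (-((0:ℕ):ℤ)) ((0:ℕ):ℤ) := by simp
    have ha0 : (|((0:ℤ):ℝ)| ^ (2*s) : ℝ) = 0 := by
      simp only [Int.cast_zero, abs_zero]
      exact Real.zero_rpow (by linarith)
    have htrig : ∀ (c : ℤ → ℂ) (y : ℝ), trig 0 c y = c 0 := by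
      intro c y
      simp [trig]
    have hghat : ∀ (c : ℤ → ℂ), ghat 0 c 0 = (‖c 0‖:ℂ)^2 * c 0 := by
      intro c
      unfold ghat
      rw [intervalIntegral.integral_congr (g := fun _ => (‖c 0‖:ℂ)^2 * c 0)
        (fun y _ => by rw [htrig c y]; simp)]
      rw [intervalIntegral.integral_const, Complex.real_smul, ← mul_assoc,
        ← Complex.ofReal_mul]
      have hval : (1/(2*π))*(π - -π) = 1 := by
        field_simp
        ring
      rw [hval, Complex.ofReal_one, one_mul]
    -- the two scalar equations
    have e1 := hc1 0 h0Icc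
    have e2 := hc2 0 h0Icc
    rw [hghat] at e1 e2
    simp only [ha0, Complex.ofReal_zero, mul_zero, zero_mul, neg_zero, mul_neg,
      neg_mul, zero_add, mul_one] at e1 e2
    -- reduce to the scalar fixed point equation
    have key : ∀ z : ℂ, (z = uc 0 + ((k*b:ℝ):ℂ) *
        (Complex.I * ((‖(z + uc 0)/2‖:ℂ)^2 * ((z + uc 0)/2)))) →
        ((z + uc 0)/2) * (2 - ((k*b:ℝ):ℂ) * Complex.I *
          ((‖(z + uc 0)/2‖^2 : ℝ):ℂ)) = 2 * uc 0 := by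
      intro z hz
      push_cast at hz ⊢
      linear_combination hz
    have k1 : ((y₁ 0 + uc 0)/2) * (2 - ((k*b:ℝ):ℂ) * Complex.I *
        ((‖(y₁ 0 + uc 0)/2‖^2 : ℝ):ℂ)) = 2 * uc 0 := key _ e1
    have k2 : ((y₂ 0 + uc 0)/2) * (2 - ((k*b:ℝ):ℂ) * Complex.I *
        ((‖(y₂ 0 + uc 0)/2‖^2 : ℝ):ℂ)) = 2 * uc 0 := key _ e2
    set t₁ : ℝ := ‖(y₁ 0 + uc 0)/2‖^2 with ht₁
    set t₂ : ℝ := ‖(y₂ 0 + uc 0)/2‖^2 with ht₂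
    have ht₁0 : 0 ≤ t₁ := by positivity
    have ht₂0 : 0 ≤ t₂ := by positivity
    have hfacnorm : ∀ t : ℝ, ‖(2:ℂ) - ((k*b:ℝ):ℂ) * Complex.I * ((t:ℝ):ℂ)‖^2
        = 4 + (k*b)^2 * t^2 := by
      intro t
      rw [Complex.sq_norm, Complex.normSq_apply]
      simp [Complex.sub_re, Complex.sub_im, Complex.mul_re, Complex.mul_im]
      ring
    have hcubic : ∀ (z : ℂ) (t : ℝ), 0 ≤ t → ‖z‖^2 = t →
        z * (2 - ((k*b:ℝ):ℂ) * Complex.I * ((t:ℝ):ℂ)) = 2 * uc 0 →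
        t * (4 + (k*b)^2 * t^2) = 4 * ‖uc 0‖^2 := by
      intro z t ht hzt hzeq
      have h3 : ‖z‖ * ‖(2:ℂ) - ((k*b:ℝ):ℂ) * Complex.I * ((t:ℝ):ℂ)‖
          = ‖(2:ℂ)‖ * ‖uc 0‖ := by
        rw [← norm_mul, ← norm_mul, hzeq]
      have h4 : ‖(2:ℂ)‖ = (2:ℝ) := by norm_num
      have h5 := congrArg (fun r : ℝ => r^2) h3
      simp only [mul_pow] at h5
      rw [hfacnorm, hzt, h4] at h5
      linear_combination h5
    have q1 := hcubic _ t₁ ht₁0 ht₁.symm k1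
    have q2 := hcubic _ t₂ ht₂0 ht₂.symm k2
    have hteq : t₁ = t₂ := by
      have hfac : (t₁ - t₂) * (4 + (k*b)^2 * (t₁^2 + t₁*t₂ + t₂^2)) = 0 := by
        linear_combination q1 - q2
      have hpos : 0 < 4 + (k*b)^2 * (t₁^2 + t₁*t₂ + t₂^2) := by
        nlinarith [sq_nonneg (k*b), sq_nonneg t₁, sq_nonneg t₂, mul_nonneg ht₁0 ht₂0]
      have := (mul_eq_zero.mp hfac).resolve_right hpos.ne'
      linarith [sub_eq_zero.mp this]
    rw [← hteq] at k2
    have hfne : (2 - ((k*b:ℝ):ℂ) * Complex.I * ((t₁:ℝ):ℂ)) ≠ 0 := by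
      intro h
      have := congrArg Complex.re h
      simp [Complex.sub_re, Complex.mul_re, Complex.mul_im] at this
    have hmeq : (y₁ 0 + uc 0)/2 = (y₂ 0 + uc 0)/2 :=
      mul_right_cancel₀ hfne (k1.trans k2.symm)
    have hy0 : y₁ 0 = y₂ 0 := by
      field_simp at hmeq
      exact add_right_cancel hmeq
    intro l hl
    have hl0 : l = 0 := by
      rw [hTdef] at hl
      simp at hl
      omega
    rw [hl0]
    exact hy0
  -- main case N ≥ 1
  set m₁ : ℤ → ℂ := fun j => (y₁ j + uc j)/2 with hm₁def
  set m₂ : ℤ → ℂ := fun j => (y₂ j + uc j)/2 with hm₂def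
  have hcard : (T.card : ℝ) = 2*(N:ℝ)+1 := by
    have : T.card = 2*N+1 := by
      rw [hTdef, Int.card_Icc]
      omega
    rw [this]
    push_cast
    ring
  set MM : ℝ := (T.card : ℝ) * Q with hMMdef
  have hMM0 : 0 ≤ MM := by positivity
  -- sup bounds for the midpoints
  have hsup : ∀ (c : ℤ → ℂ), (∑ j ∈ T, ‖c j‖^2 ≤ Q) → ∀ y : ℝ,
      ‖esum T c y‖ ≤ Real.sqrt MM := by
    intro c hc y
    refine le_trans (esum_sup T c y) (Real.sqrt_le_sqrt ?_)
    rw [hMMdef]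
    have : (0:ℝ) ≤ (T.card : ℝ) := by positivity
    nlinarith
  -- the difference function H
  set gfun : (ℤ → ℂ) → ℝ → ℂ := fun c y => (‖trig N c y‖:ℂ)^2 * trig N c y with hgfun
  set H : ℝ → ℂ := fun y => gfun m₁ y - gfun m₂ y with hHdef
  have hGc : ∀ c, Continuous (gfun c) := fun c =>
    ((Complex.continuous_ofReal.comp (trig_cont N c).norm).pow 2).mul (trig_cont N c)
  have hHc : Continuous H := (hGc m₁).sub (hGc m₂)
  set gH : ℤ → ℂ := fun l => ghat N m₁ l - ghat N m₂ l with hgHdef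
  have stepB : ∀ l : ℤ, ((2*π:ℝ):ℂ) * gH l
      = ∫ y in (-π)..π, H y * Complex.exp (-Complex.I * (l:ℂ) * (y:ℂ)) := by
    intro l
    have h2pi1 : ((2*π:ℝ):ℂ) * ((1/(2*π):ℝ):ℂ) = 1 := by
      rw [← Complex.ofReal_mul]
      norm_cast
      field_simp
    have i1 : IntervalIntegrable (fun y => gfun m₁ y *
        Complex.exp (-Complex.I * (l:ℂ) * (y:ℂ))) MeasureTheory.volume (-π) π :=
      ((hGc m₁).mul (by fun_prop)).intervalIntegrable _ _
    have i2 : IntervalIntegrable (fun y => gfun m₂ y *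
        Complex.exp (-Complex.I * (l:ℂ) * (y:ℂ))) MeasureTheory.volume (-π) π :=
      ((hGc m₂).mul (by fun_prop)).intervalIntegrable _ _
    rw [hgHdef]
    simp only [ghat, mul_sub]
    rw [← mul_assoc, ← mul_assoc, h2pi1, one_mul, one_mul, ← intervalIntegral.integral_sub i1 i2]
    refine intervalIntegral.integral_congr fun y _ => ?_
    rw [hHdef, hgfun]
    ring
  -- coefficient-wise contraction
  have stepA : ∀ l ∈ T, ‖y₁ l - y₂ l‖ ≤ (k*|b|) * ‖gH l‖ := by
    intro l hl
    have e1 := hc1 l hl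
    have e2 := hc2 l hl
    simp only [hm₁def, hm₂def] at e1 e2 ⊢
    have hdl : (y₁ l - y₂ l) * (1 + ((k*b*(|(l:ℝ)|^(2*s))/2 : ℝ):ℂ) * Complex.I)
        = Complex.I * ((k*b:ℝ):ℂ) * gH l := by
      rw [hgHdef]
      push_cast at e1 e2 ⊢
      linear_combination e1 - e2
    have hge : (1:ℝ) ≤ ‖1 + ((k*b*(|(l:ℝ)|^(2*s))/2 : ℝ):ℂ) * Complex.I‖ := by
      have h1 := Complex.abs_re_le_norm (1 + ((k*b*(|(l:ℝ)|^(2*s))/2 : ℝ):ℂ) * Complex.I)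
      simp only [Complex.add_re, Complex.one_re, Complex.mul_re, Complex.I_re,
        Complex.ofReal_re, Complex.I_im, Complex.ofReal_im, mul_zero, mul_one, zero_mul] at h1
      simpa using h1
    calc ‖y₁ l - y₂ l‖ = ‖y₁ l - y₂ l‖ * 1 := (mul_one _).symm
      _ ≤ ‖y₁ l - y₂ l‖ * ‖1 + ((k*b*(|(l:ℝ)|^(2*s))/2 : ℝ):ℂ) * Complex.I‖ := by
          exact mul_le_mul_of_nonneg_left hge (norm_nonneg _)
      _ = ‖(y₁ l - y₂ l) * (1 + ((k*b*(|(l:ℝ)|^(2*s))/2 : ℝ):ℂ) * Complex.I)‖ :=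
          (norm_mul _ _).symm
      _ = ‖Complex.I * ((k*b:ℝ):ℂ) * gH l‖ := by rw [hdl]
      _ = (k*|b|) * ‖gH l‖ := by
          rw [norm_mul, norm_mul, Complex.norm_I, one_mul, Complex.norm_real]
          rw [Real.norm_eq_abs, abs_mul, abs_of_pos hk]
  -- assemble
  set D2 : ℝ := ∑ l ∈ T, ‖y₁ l - y₂ l‖^2 with hD2def
  have hD2nn : 0 ≤ D2 := Finset.sum_nonneg fun l _ => by positivity
  have c1 : D2 ≤ (k*|b|)^2 * ∑ l ∈ T, ‖gH l‖^2 := by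
    rw [Finset.mul_sum, hD2def]
    refine Finset.sum_le_sum fun l hl => ?_
    have := stepA l hl
    nlinarith [norm_nonneg (y₁ l - y₂ l), norm_nonneg (gH l)]
  have c2 : (2*π) * ∑ l ∈ T, ‖gH l‖^2 ≤ ∫ y in (-π)..π, ‖H y‖^2 :=
    bessel T H hHc gH stepB
  have hdiff : ∀ y : ℝ, trig N m₁ y - trig N m₂ y
      = esum T (fun j => (y₁ j - y₂ j)/2) y := by
    intro y
    simp only [trig, esum, hTdef, ← Finset.sum_sub_distrib]
    refine Finset.sum_congr rfl fun j _ => ?_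
    rw [hm₁def, hm₂def]
    ring
  have hm1Q' : ∑ j ∈ T, ‖m₁ j‖^2 ≤ Q := hm1Q
  have hm2Q' : ∑ j ∈ T, ‖m₂ j‖^2 ≤ Q := hm2Q
  have hptH : ∀ y : ℝ, ‖H y‖^2 ≤ 9*MM^2 * ‖esum T (fun j => (y₁ j - y₂ j)/2) y‖^2 := by
    intro y
    have hz : ‖trig N m₁ y‖ ≤ Real.sqrt MM := by
      rw [trig_esum]
      exact hsup m₁ hm1Q' y
    have hw : ‖trig N m₂ y‖ ≤ Real.sqrt MM := by
      rw [trig_esum]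
      exact hsup m₂ hm2Q' y
    have hlip := cubic_lip (trig N m₁ y) (trig N m₂ y) (Real.sqrt MM) hz hw
    rw [Real.sq_sqrt hMM0, hdiff y] at hlip
    have hHy : ‖H y‖ ≤ 3*MM*‖esum T (fun j => (y₁ j - y₂ j)/2) y‖ := by
      simp only [hHdef, hgfun]
      exact hlip
    calc ‖H y‖^2 ≤ (3*MM*‖esum T (fun j => (y₁ j - y₂ j)/2) y‖)^2 :=
          pow_le_pow_left₀ (norm_nonneg _) hHy 2
      _ = 9*MM^2 * ‖esum T (fun j => (y₁ j - y₂ j)/2) y‖^2 := by ring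
  have c3 : ∫ y in (-π)..π, ‖H y‖^2 ≤ 9*MM^2 * ((2*π) * ∑ l ∈ T, ‖(y₁ l - y₂ l)/2‖^2) := by
    have iH : IntervalIntegrable (fun y => ‖H y‖^2) MeasureTheory.volume (-π) π :=
      (hHc.norm.pow 2).intervalIntegrable (-π) π
    have iE : IntervalIntegrable (fun y => 9*MM^2 *
        ‖esum T (fun j => (y₁ j - y₂ j)/2) y‖^2) MeasureTheory.volume (-π) π :=
      (continuous_const.mul ((esum_cont T
        (fun j => (y₁ j - y₂ j)/2)).norm.pow 2)).intervalIntegrable (-π) π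
    have hmono := intervalIntegral.integral_mono_on (by linarith : -π ≤ π) iH iE
      (fun y _ => hptH y)
    rw [intervalIntegral.integral_const_mul, parseval] at hmono
    exact hmono
  have hhalf : ∑ l ∈ T, ‖(y₁ l - y₂ l)/2‖^2 = D2/4 := by
    rw [hD2def, Finset.sum_div]
    refine Finset.sum_congr rfl fun l _ => ?_
    rw [norm_div]
    ring_nf
    norm_num
  -- final contraction
  have hfin : D2 ≤ ((3/2)*k*|b| * MM)^2 * D2 := by
    have e1 : (2*π) * ∑ l ∈ T, ‖gH l‖^2 ≤ 9*MM^2 * ((2*π) * (D2/4)) := by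
      rw [← hhalf]
      exact le_trans c2 c3
    have hπ' : 0 < 2*π := by linarith
    have e2 : ∑ l ∈ T, ‖gH l‖^2 ≤ 9*MM^2 * (D2/4) := by
      rw [show 9*MM^2 * ((2*π) * (D2/4)) = (2*π) * (9*MM^2 * (D2/4)) from by ring] at e1
      exact le_of_mul_le_mul_left e1 hπ'
    calc D2 ≤ (k*|b|)^2 * ∑ l ∈ T, ‖gH l‖^2 := c1
      _ ≤ (k*|b|)^2 * (9*MM^2 * (D2/4)) := by
          have : (0:ℝ) ≤ (k*|b|)^2 := sq_nonneg _
          nlinarith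
      _ = ((3/2)*k*|b| * MM)^2 * D2 := by ring
  have hβ : (3/2)*k*|b| * MM ≤ 3*R^2*k*(N:ℝ)*|b| := by
    have hMMval : (3/2)*k*|b| * MM = 3*k*|b| * (2*(N:ℝ)+1)*R^2/(4*π) := by
      rw [hMMdef, hcard, hQdef]
      ring
    rw [hMMval, div_le_iff₀ (by linarith : (0:ℝ) < 4*π)]
    have hN1 : (1:ℝ) ≤ (N:ℝ) := by exact_mod_cast hNpos
    have hπ3 : (3:ℝ) < π := Real.pi_gt_three
    have hb0 : 0 ≤ |b| := abs_nonneg b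
    have hcore : (2*(N:ℝ)+1) ≤ 4*π*(N:ℝ) := by nlinarith
    have hfac : 0 ≤ 3*k*|b| * R^2 := by positivity
    nlinarith [mul_le_mul_of_nonneg_left hcore hfac]
  have hβ0 : 0 ≤ (3/2)*k*|b| * MM := by positivity
  clear_value MM D2 H gfun gH m₁ m₂ T Q
  have hγ0 : 0 ≤ 3*R^2*k*(N:ℝ)*|b| := by positivity
  have hθ : ((3/2)*k*|b| * MM)^2 < 1 := by nlinarith
  have hD20 : D2 = 0 := le_antisymm (by nlinarith) hD2nn
  have hterm := (Finset.sum_eq_zero_iff_of_nonneg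
    (fun l (_ : l ∈ T) => by positivity : ∀ l ∈ T, (0:ℝ) ≤ ‖y₁ l - y₂ l‖^2)).mp
    (hD2def ▸ hD20)
  intro l hl
  have hzero : ‖y₁ l - y₂ l‖ = 0 :=
    pow_eq_zero_iff (two_ne_zero) |>.mp (hterm l hl)
  exact sub_eq_zero.mp (norm_eq_zero.mp hzero)
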